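/- Let v ∈ Γ be primitive with (v.v) < 0. Then disc(K_v) ≡ 0 (mod 6) if and only if K_v = ℤh² + ℤv, and disc(K_v) ≡ 2 (mod 6) if and only if ℤh² + ℤv has index 3 in K_v. -/

import Mathlib

open scoped BigOperators

noncomputable section

/-- The negative definite `E₈` Gram matrix. -/
def E8M : Matrix (Fin 8) (Fin 8) ℤ := - CartanMatrix.E₈

/-- The Gram matrix of the cubic lattice `Γ̄ = E₈(-1)² ⊕ U² ⊕ I₀,₃` on `ℤ²³`. -/
def gramC : Fin 23 → Fin 23 → ℤ := fun i j =>
  if i.val < 8 ∧ j.val < 8 then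
    E8M ⟨i.val % 8, Nat.mod_lt _ (by norm_num)⟩ ⟨j.val % 8, Nat.mod_lt _ (by norm_num)⟩
  else if 8 ≤ i.val ∧ i.val < 16 ∧ 8 ≤ j.val ∧ j.val < 16 then
    E8M ⟨(i.val - 8) % 8, Nat.mod_lt _ (by norm_num)⟩ ⟨(j.val - 8) % 8, Nat.mod_lt _ (by norm_num)⟩
  else if (i.val = 16 ∧ j.val = 17) ∨ (i.val = 17 ∧ j.val = 16) ∨
      (i.val = 18 ∧ j.val = 19) ∨ (i.val = 19 ∧ j.val = 18) then 1
  else if 20 ≤ i.val ∧ i = j then -1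
  else 0

/-- The bilinear form of the cubic lattice `Γ̄`. -/
def GB (x y : Fin 23 → ℤ) : ℤ := ∑ i, ∑ j, gramC i j * x i * y j

/-- The class `h² = (0,…,0,1,1,1)`. -/
def h2 : Fin 23 → ℤ := Pi.single 20 1 + Pi.single 21 1 + Pi.single 22 1

/-- A vector is primitive if it is not `m • w` with `|m| ≥ 2`. -/
def PrimitiveC (v : Fin 23 → ℤ) : Prop :=
  ¬ ∃ (m : ℤ) (w : Fin 23 → ℤ), 2 ≤ |m| ∧ v = m • w

/-- Membership in `Γ = (h²)^⊥ ⊂ Γ̄`. -/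
def inGamma (x : Fin 23 → ℤ) : Prop := GB h2 x = 0

lemma GB_add_right (x y z : Fin 23 → ℤ) : GB x (y + z) = GB x y + GB x z := by
  simp [GB, Pi.add_apply, mul_add, Finset.sum_add_distrib]

lemma GB_smul_right (c : ℤ) (x y : Fin 23 → ℤ) : GB x (c • y) = c * GB x y := by
  simp only [GB, Finset.mul_sum]
  refine Finset.sum_congr rfl fun i _ => Finset.sum_congr rfl fun j _ => ?_
  simp only [Pi.smul_apply, smul_eq_mul]; ring

/-- `Γ = (h²)^⊥` as a submodule of `ℤ²³`. -/
def Gamma : Submodule ℤ (Fin 23 → ℤ) where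
  carrier := {x | GB h2 x = 0}
  add_mem' := by
    intro a b ha hb
    simp only [Set.mem_setOf_eq] at *
    rw [GB_add_right, ha, hb, add_zero]
  zero_mem' := by simp [GB]
  smul_mem' := by
    intro c x hx
    simp only [Set.mem_setOf_eq] at *
    rw [GB_smul_right, hx, mul_zero]

/-- The saturation of a submodule. -/
def sat {R M : Type*} [CommRing R] [IsDomain R] [AddCommGroup M] [Module R M] (N : Submodule R M) :
    Submodule R M where
  carrier := {x | ∃ n : R, n ≠ 0 ∧ n • x ∈ N}
  add_mem' := by
    rintro x y ⟨n, hn, hx⟩ ⟨m, hm, hy⟩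
    refine ⟨n * m, mul_ne_zero hn hm, ?_⟩
    have h1 : (n * m) • (x + y) = m • (n • x) + n • (m • y) := by
      rw [smul_add, mul_comm n m, mul_smul, mul_smul, smul_comm m n y]
    rw [h1]
    exact N.add_mem (N.smul_mem m hx) (N.smul_mem n hy)
  zero_mem' := ⟨1, one_ne_zero, by simp⟩
  smul_mem' := by
    rintro c x ⟨n, hn, hx⟩
    exact ⟨n, hn, by rw [smul_comm]; exact N.smul_mem c hx⟩

/-- The saturation `K_v` of `ℤh² + ℤv` in `Γ̄`. -/
def Kv (v : Fin 23 → ℤ) : Submodule ℤ (Fin 23 → ℤ) :=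
  sat (Submodule.span ℤ ({h2, v} : Set (Fin 23 → ℤ)))

/-- `d` is the discriminant of `K_v`: some ℤ-basis of `K_v` has Gram determinant `d`. -/
def discIs (v : Fin 23 → ℤ) (d : ℤ) : Prop :=
  ∃ x y : Fin 23 → ℤ, Kv v = Submodule.span ℤ ({x, y} : Set (Fin 23 → ℤ)) ∧
    d = GB x x * GB y y - GB x y * GB y x

/-- The index of `ℤh² + ℤv` in its saturation `K_v`. -/
def idx (v : Fin 23 → ℤ) : ℕ :=
  (Submodule.span ℤ ({h2, v} : Set (Fin 23 → ℤ))).toAddSubgroup.relIndex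
    (Kv v).toAddSubgroup

/-- Isometries of the cubic lattice `Γ̄`. -/
def IsIsomC (g : (Fin 23 → ℤ) ≃ₗ[ℤ] (Fin 23 → ℤ)) : Prop := ∀ x y, GB (g x) (g y) = GB x y

end
lemma gram_symm : ∀ i j : Fin 23, gramC i j = gramC j i := by decide
lemma gram_row_late : ∀ i j : Fin 23, 20 ≤ i.val → gramC i j = if j = i then -1 else 0 := by decide
lemma gram_diag_even : ∀ i : Fin 23, i.val < 20 → 2 ∣ gramC i i := by decide
lemma gram_diag_late : ∀ i : Fin 23, 20 ≤ i.val → gramC i i = -1 := by decide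

lemma GB_comm (x y : Fin 23 → ℤ) : GB x y = GB y x := by
  unfold GB
  rw [Finset.sum_comm]
  refine Finset.sum_congr rfl fun j _ => Finset.sum_congr rfl fun i _ => ?_
  rw [gram_symm i j]; ring

lemma GB_add_left (x y z : Fin 23 → ℤ) : GB (x + y) z = GB x z + GB y z := by
  rw [GB_comm, GB_add_right, GB_comm z x, GB_comm z y]

lemma GB_smul_left (c : ℤ) (x y : Fin 23 → ℤ) : GB (c • x) y = c * GB x y := by
  rw [GB_comm, GB_smul_right, GB_comm]

lemma h2_apply_20 : h2 20 = 1 := by decide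
lemma h2_apply_21 : h2 21 = 1 := by decide
lemma h2_apply_22 : h2 22 = 1 := by decide

lemma row_sum_late (i : Fin 23) (hi : 20 ≤ i.val) (c : ℤ) (x : Fin 23 → ℤ) :
    ∑ j, gramC i j * c * x j = - (c * x i) := by
  have : ∀ j, gramC i j * c * x j = (if j = i then -(c * x j) else 0) := by
    intro j; rw [gram_row_late i j hi]
    by_cases h : j = i <;> simp [h]
  rw [Finset.sum_congr rfl fun j _ => this j, Finset.sum_ite_eq' Finset.univ i fun j => -(c * x j)]
  simp


lemma GB_h2_left (x : Fin 23 → ℤ) : GB h2 x = -(x 20 + x 21 + x 22) := by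
  unfold GB
  have key : ∀ i : Fin 23, ∑ j, gramC i j * h2 i * x j =
      (if i = 20 then -(x 20) else 0) + (if i = 21 then -(x 21) else 0) +
      (if i = 22 then -(x 22) else 0) := by
    intro i
    by_cases h20 : i = 20
    · subst h20
      rw [row_sum_late 20 (by decide) (h2 20) x, h2_apply_20, if_pos rfl,
        if_neg (show (20:Fin 23) ≠ 21 by decide), if_neg (show (20:Fin 23) ≠ 22 by decide)]
      ring
    · by_cases h21 : i = 21
      · subst h21
        rw [row_sum_late 21 (by decide) (h2 21) x, h2_apply_21, if_pos rfl,
          if_neg (show (21:Fin 23) ≠ 20 by decide), if_neg (show (21:Fin 23) ≠ 22 by decide)]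
        ring
      · by_cases h22 : i = 22
        · subst h22
          rw [row_sum_late 22 (by decide) (h2 22) x, h2_apply_22, if_pos rfl,
            if_neg (show (22:Fin 23) ≠ 20 by decide), if_neg (show (22:Fin 23) ≠ 21 by decide)]
          ring
        · have hz : ∀ i : Fin 23, i ≠ 20 → i ≠ 21 → i ≠ 22 → h2 i = 0 := by decide
          rw [if_neg h20, if_neg h21, if_neg h22]
          simp [hz i h20 h21 h22]
  rw [Finset.sum_congr rfl fun i _ => key i]
  simp [Finset.sum_add_distrib, Finset.sum_ite_eq']
  ring

lemma sum_three {M : Type*} [AddCommMonoid M] (f : Fin 23 → M) :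
    ∑ i : Fin 23, ((if i = 20 then f 20 else 0) + (if i = 21 then f 21 else 0) +
      (if i = 22 then f 22 else 0)) = f 20 + f 21 + f 22 := by
  simp [Finset.sum_add_distrib, Finset.sum_ite_eq']

lemma GB_self_parity (x : Fin 23 → ℤ) : 2 ∣ GB x x - GB h2 x := by
  have hsq : ∀ z : ZMod 2, z * z = z := by decide
  have hneg : ∀ z : ZMod 2, -z = z := by decide
  have hadd : ∀ z : ZMod 2, z + z = 0 := by decide
  set F : Fin 23 × Fin 23 → ZMod 2 :=
    fun p => ((gramC p.1 p.2 : ZMod 2)) * ((x p.1 : ZMod 2)) * ((x p.2 : ZMod 2)) with hF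
  have h1 : ((GB x x : ℤ) : ZMod 2) = ∑ p ∈ Finset.univ ×ˢ Finset.univ, F p := by
    rw [GB, Finset.sum_product]
    push_cast
    rfl
  have hdiagset : (Finset.univ ×ˢ Finset.univ).filter (fun p : Fin 23 × Fin 23 => p.1 = p.2)
      = (Finset.univ : Finset (Fin 23)).diag := by
    ext p; simp [Finset.mem_diag, Finset.mem_filter, eq_comm]
  have hoff : ∑ p ∈ (Finset.univ ×ˢ Finset.univ).filter
      (fun p : Fin 23 × Fin 23 => ¬ p.1 = p.2), F p = 0 := by
    refine Finset.sum_involution (fun p _ => p.swap) ?_ ?_ ?_ ?_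
    · intro p hp
      have hs : F p.swap = F p := by
        simp only [hF, Prod.fst_swap, Prod.snd_swap]
        rw [gram_symm p.2 p.1]; ring
      rw [hs]; exact hadd _
    · intro p hp _
      simp only [Finset.mem_filter] at hp
      intro hcon
      exact hp.2 ((congrArg Prod.fst hcon).symm ▸ rfl)
    · intro p hp
      simp only [Finset.mem_filter, Finset.mem_product] at hp ⊢
      exact ⟨⟨Finset.mem_univ _, Finset.mem_univ _⟩, fun h => hp.2 h.symm⟩
    · intro p hp; exact Prod.swap_swap p
  have hFdiag : ∀ i : Fin 23, F (i, i) =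
      (if i = 20 then ((x 20 : ZMod 2)) else 0) + (if i = 21 then ((x 21 : ZMod 2)) else 0) +
      (if i = 22 then ((x 22 : ZMod 2)) else 0) := by
    intro i
    by_cases h : 20 ≤ i.val
    · have hv : i.val = 20 ∨ i.val = 21 ∨ i.val = 22 := by have := i.isLt; omega
      have hm1 : ((-1 : ℤ) : ZMod 2) = 1 := by decide
      rcases hv with hv | hv | hv
      · have : i = 20 := Fin.ext hv
        subst this
        simp only [hF, gram_diag_late 20 (by decide), hm1, one_mul, hsq, if_pos rfl,
          if_neg (show (20 : Fin 23) ≠ 21 by decide), if_neg (show (20 : Fin 23) ≠ 22 by decide)]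
        simp [hsq]
      · have : i = 21 := Fin.ext hv
        subst this
        simp only [hF, gram_diag_late 21 (by decide), hm1, one_mul, if_pos rfl,
          if_neg (show (21 : Fin 23) ≠ 20 by decide), if_neg (show (21 : Fin 23) ≠ 22 by decide)]
        simp [hsq]
      · have : i = 22 := Fin.ext hv
        subst this
        simp only [hF, gram_diag_late 22 (by decide), hm1, one_mul, if_pos rfl,
          if_neg (show (22 : Fin 23) ≠ 20 by decide), if_neg (show (22 : Fin 23) ≠ 21 by decide)]
        simp [hsq]
    · have h0 : ((gramC i i : ℤ) : ZMod 2) = 0 :=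
        (ZMod.intCast_zmod_eq_zero_iff_dvd _ 2).mpr (gram_diag_even i (by omega))
      have hn20 : i ≠ 20 := by intro e; subst e; exact h (by decide)
      have hn21 : i ≠ 21 := by intro e; subst e; exact h (by decide)
      have hn22 : i ≠ 22 := by intro e; subst e; exact h (by decide)
      simp only [hF, h0, zero_mul, if_neg hn20, if_neg hn21, if_neg hn22, add_zero]
  have hmain : ((GB x x : ℤ) : ZMod 2) = ((GB h2 x : ℤ) : ZMod 2) := by
    rw [h1, ← Finset.sum_filter_add_sum_filter_not (Finset.univ ×ˢ Finset.univ)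
      (fun p : Fin 23 × Fin 23 => p.1 = p.2) F, hoff, add_zero, hdiagset, Finset.sum_diag,
      Finset.sum_congr rfl fun i _ => hFdiag i, sum_three (fun i => ((x i : ZMod 2)))]
    rw [GB_h2_left]
    push_cast
    rw [neg_add, neg_add, hneg, hneg, hneg]
  have hmod := (ZMod.intCast_eq_intCast_iff _ _ 2).mp hmain
  exact Int.ModEq.dvd hmod.symm

lemma GB_h2_h2 : GB h2 h2 = -3 := by
  rw [GB_h2_left, h2_apply_20, h2_apply_21, h2_apply_22]; norm_num

lemma smul_cancel {n : ℤ} (hn : n ≠ 0) {x y : Fin 23 → ℤ} (h : n • x = n • y) : x = y := by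
  funext i
  have hi := congrFun h i
  simp only [Pi.smul_apply, smul_eq_mul] at hi
  exact mul_left_cancel₀ hn hi

lemma prim_eq {v : Fin 23 → ℤ} (hv : PrimitiveC v) {n m : ℤ} (hn : n ≠ 0) {y : Fin 23 → ℤ}
    (h : n • y = m • v) : ∃ b : ℤ, m = n * b ∧ y = b • v := by
  set g : ℕ := Int.gcd n m with hg
  have hgpos : 0 < g := Nat.pos_of_ne_zero (fun h0 => hn (by
    have := Int.gcd_eq_zero_iff.mp (hg ▸ h0); exact this.1))
  have hgz : (g : ℤ) ≠ 0 := Int.natCast_ne_zero.mpr hgpos.ne'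
  set n' : ℤ := n / g with hn'
  set m' : ℤ := m / g with hm'
  have hnn : n = g * n' := by
    rw [hn']; exact (Int.mul_ediv_cancel' (Int.gcd_dvd_left n m)).symm
  have hmm : m = g * m' := by
    rw [hm']; exact (Int.mul_ediv_cancel' (Int.gcd_dvd_right n m)).symm
  have hcop : IsCoprime n' m' := by
    rw [Int.isCoprime_iff_gcd_eq_one]
    exact Int.gcd_div_gcd_div_gcd hgpos
  have hn'0 : n' ≠ 0 := by
    intro h0; rw [h0, mul_zero] at hnn; exact hn hnn
  have hstep : n' • y = m' • v := by
    apply smul_cancel hgz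
    funext i
    have hi := congrFun h i
    simp only [Pi.smul_apply, smul_eq_mul] at hi ⊢
    rw [hnn, hmm] at hi; ring_nf at hi ⊢; linarith [hi]
  have hdvd : ∀ i, n' ∣ v i := by
    intro i
    have hi := congrFun hstep i
    simp only [Pi.smul_apply, smul_eq_mul] at hi
    exact hcop.dvd_of_dvd_mul_left ⟨y i, by linarith [hi]⟩
  have habs : |n'| ≤ 1 := by
    by_contra hgt
    push_neg at hgt
    exact hv ⟨n', fun i => v i / n', by omega, funext fun i => by
      simp only [Pi.smul_apply, smul_eq_mul]
      exact (Int.mul_ediv_cancel' (hdvd i)).symm⟩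
  have hcase : n' = 1 ∨ n' = -1 := by
    rw [abs_le] at habs; rcases habs with ⟨hl, hr⟩; omega
  refine ⟨n' * m', by rw [hnn, hmm]; rcases hcase with h1 | h1 <;> rw [h1] <;> ring, ?_⟩
  apply smul_cancel hn'0
  rw [hstep]
  funext i
  simp only [Pi.smul_apply, smul_eq_mul]
  rcases hcase with h1 | h1 <;> rw [h1] <;> ring

lemma mem_Kv {v x : Fin 23 → ℤ} :
    x ∈ Kv v ↔ ∃ n : ℤ, n ≠ 0 ∧ n • x ∈ Submodule.span ℤ ({h2, v} : Set (Fin 23 → ℤ)) :=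
  Iff.rfl

lemma span_le_Kv (v : Fin 23 → ℤ) : Submodule.span ℤ ({h2, v} : Set (Fin 23 → ℤ)) ≤ Kv v :=
  fun x hx => ⟨1, one_ne_zero, by simpa using hx⟩

lemma h2_mem_span (v : Fin 23 → ℤ) : h2 ∈ Submodule.span ℤ ({h2, v} : Set (Fin 23 → ℤ)) :=
  Submodule.subset_span (Set.mem_insert _ _)

lemma v_mem_span (v : Fin 23 → ℤ) : v ∈ Submodule.span ℤ ({h2, v} : Set (Fin 23 → ℤ)) :=
  Submodule.subset_span (Set.mem_insert_of_mem _ rfl)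

lemma Kv_three {v : Fin 23 → ℤ} (hvG : inGamma v) (hv : PrimitiveC v) {x : Fin 23 → ℤ}
    (hx : x ∈ Kv v) : ∃ q : ℤ, (3 : ℤ) • x = (-(GB h2 x)) • h2 + q • v := by
  obtain ⟨n, hn, hmem⟩ := mem_Kv.mp hx
  obtain ⟨p, q, hpq⟩ := Submodule.mem_span_pair.mp hmem
  have hGB : n * GB h2 x = -3 * p := by
    have hh := congrArg (GB h2) hpq
    rw [GB_add_right, GB_smul_right, GB_smul_right, GB_smul_right, GB_h2_h2, hvG] at hh
    linarith [hh]
  have key : n • ((3 : ℤ) • x + (GB h2 x) • h2) = (3 * q) • v := by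
    funext i
    have hi := congrFun hpq i
    simp only [Pi.add_apply, Pi.smul_apply, smul_eq_mul] at hi ⊢
    linear_combination (-3) * hi + h2 i * hGB
  obtain ⟨b, hb, hy⟩ := prim_eq hv hn key
  refine ⟨b, ?_⟩
  funext i
  have hi := congrFun hy i
  simp only [Pi.add_apply, Pi.smul_apply, smul_eq_mul] at hi ⊢
  linarith [hi]

lemma dichotomy (v : Fin 23 → ℤ) (hvG : inGamma v) (hv : PrimitiveC v) :
    Kv v = Submodule.span ℤ ({h2, v} : Set (Fin 23 → ℤ)) ∨
    (Kv v ≠ Submodule.span ℤ ({h2, v} : Set (Fin 23 → ℤ)) ∧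
      ∃ (a : ℤ) (u : Fin 23 → ℤ), u ∈ Kv v ∧ ¬ (3 ∣ a) ∧ (3 : ℤ) • u = a • h2 + v ∧
        Kv v = Submodule.span ℤ ({h2, u} : Set (Fin 23 → ℤ))) := by
  by_cases heq : Kv v = Submodule.span ℤ ({h2, v} : Set (Fin 23 → ℤ))
  · exact Or.inl heq
  right
  refine ⟨heq, ?_⟩
  have hnle : ¬ (Kv v ≤ Submodule.span ℤ ({h2, v} : Set (Fin 23 → ℤ))) :=
    fun hle => heq (le_antisymm hle (span_le_Kv v))
  obtain ⟨x, hxK, hxs⟩ := SetLike.not_le_iff_exists.mp hnle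
  obtain ⟨q, hq⟩ := Kv_three hvG hv hxK
  set p : ℤ := -(GB h2 x) with hp
  by_cases h3q : (3 : ℤ) ∣ q
  · exfalso
    obtain ⟨q₂, rfl⟩ := h3q
    have h20 := congrFun hq 20
    simp only [Pi.add_apply, Pi.smul_apply, smul_eq_mul, h2_apply_20] at h20
    have h3p : (3 : ℤ) ∣ p := ⟨x 20 - q₂ * v 20, by linear_combination -h20⟩
    obtain ⟨p₂, hp₂⟩ := h3p
    apply hxs
    have hxeq : x = p₂ • h2 + q₂ • v := by
      apply smul_cancel (show (3:ℤ) ≠ 0 by norm_num)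
      funext i
      have hi := congrFun hq i
      simp only [Pi.add_apply, Pi.smul_apply, smul_eq_mul] at hi ⊢
      rw [hp₂] at hi; linear_combination hi
    rw [hxeq]
    exact Submodule.add_mem _ (Submodule.smul_mem _ _ (h2_mem_span v))
      (Submodule.smul_mem _ _ (v_mem_span v))
  · -- 3 ∤ q : build u with (3 : ℤ) • u = (q*p) • h2 + v
    have hqq : ∃ c : ℤ, q * q = 1 + 3 * c := by
      have h1 : q % 3 = 1 ∨ q % 3 = 2 := by omega
      obtain ⟨k, hk⟩ : ∃ k, q = 3 * k + q % 3 := ⟨q / 3, by omega⟩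
      rcases h1 with h | h <;> rw [h] at hk
      · exact ⟨3 * k * k + 2 * k, by rw [hk]; ring⟩
      · exact ⟨3 * k * k + 4 * k + 1, by rw [hk]; ring⟩
    obtain ⟨c, hc⟩ := hqq
    set u : Fin 23 → ℤ := q • x - c • v with hu
    have huK : u ∈ Kv v :=
      Submodule.sub_mem _ (Submodule.smul_mem _ _ hxK)
        (Submodule.smul_mem _ _ (span_le_Kv v (v_mem_span v)))
    have hu3 : (3 : ℤ) • u = (q * p) • h2 + v := by
      funext i
      have hi := congrFun hq i
      simp only [hu, Pi.add_apply, Pi.sub_apply, Pi.smul_apply, smul_eq_mul] at hi ⊢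
      linear_combination q * hi + v i * hc
    have h3a : ¬ (3 : ℤ) ∣ (q * p) := by
      intro ⟨a₃, ha₃⟩
      apply hv
      refine ⟨3, fun i => u i - a₃ * h2 i, by norm_num, ?_⟩
      funext i
      have hi := congrFun hu3 i
      simp only [Pi.add_apply, Pi.smul_apply, smul_eq_mul] at hi ⊢
      rw [ha₃] at hi; linear_combination -hi
    refine ⟨q * p, u, huK, h3a, hu3, ?_⟩
    apply le_antisymm
    · intro y hyK
      obtain ⟨q', hq'⟩ := Kv_three hvG hv hyK
      set p' : ℤ := -(GB h2 y) with hp'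
      have h20 := congrFun hq' 20
      have hu20 := congrFun hu3 20
      simp only [Pi.add_apply, Pi.smul_apply, smul_eq_mul, h2_apply_20] at h20 hu20
      have h3k : (3 : ℤ) ∣ (p' - q' * (q * p)) :=
        ⟨y 20 - q' * u 20, by linear_combination q' * hu20 - h20⟩
      obtain ⟨k, hk⟩ := h3k
      have hyeq : y = k • h2 + q' • u := by
        apply smul_cancel (show (3:ℤ) ≠ 0 by norm_num)
        funext i
        have hi := congrFun hq' i
        have hui := congrFun hu3 i
        simp only [Pi.add_apply, Pi.smul_apply, smul_eq_mul] at hi hui ⊢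
        linear_combination hi - q' * hui + h2 i * hk
      rw [hyeq]
      exact Submodule.add_mem _ (Submodule.smul_mem _ _ (h2_mem_span u))
        (Submodule.smul_mem _ _ (v_mem_span u))
    · rw [Submodule.span_le]
      rintro z (rfl | hz)
      · exact span_le_Kv v (h2_mem_span v)
      · simp only [Set.mem_singleton_iff] at hz
        subst hz
        exact huK

lemma GB_expand {x' y' z w : Fin 23 → ℤ} {a b c d : ℤ}
    (hz : a • x' + b • y' = z) (hw : c • x' + d • y' = w) :
    GB z w = a * c * GB x' x' + a * d * GB x' y' + b * c * GB y' x' + b * d * GB y' y' := by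
  rw [← hz, ← hw, GB_add_left, GB_add_right, GB_add_right, GB_smul_left, GB_smul_left,
    GB_smul_right, GB_smul_right, GB_smul_right, GB_smul_right, GB_smul_left, GB_smul_left]
  ring

lemma det_span_eq (x y x' y' : Fin 23 → ℤ)
    (h : Submodule.span ℤ ({x, y} : Set (Fin 23 → ℤ)) =
      Submodule.span ℤ ({x', y'} : Set (Fin 23 → ℤ)))
    (hne : GB x' x' * GB y' y' - GB x' y' * GB y' x' ≠ 0) :
    GB x x * GB y y - GB x y * GB y x = GB x' x' * GB y' y' - GB x' y' * GB y' x' := by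
  have hx : x ∈ Submodule.span ℤ ({x', y'} : Set (Fin 23 → ℤ)) := by
    rw [← h]; exact Submodule.subset_span (Set.mem_insert _ _)
  have hy : y ∈ Submodule.span ℤ ({x', y'} : Set (Fin 23 → ℤ)) := by
    rw [← h]; exact Submodule.subset_span (Set.mem_insert_of_mem _ rfl)
  have hx' : x' ∈ Submodule.span ℤ ({x, y} : Set (Fin 23 → ℤ)) := by
    rw [h]; exact Submodule.subset_span (Set.mem_insert _ _)
  have hy' : y' ∈ Submodule.span ℤ ({x, y} : Set (Fin 23 → ℤ)) := by
    rw [h]; exact Submodule.subset_span (Set.mem_insert_of_mem _ rfl)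
  obtain ⟨p, q, hpq⟩ := Submodule.mem_span_pair.mp hx
  obtain ⟨r, s, hrs⟩ := Submodule.mem_span_pair.mp hy
  obtain ⟨p', q', hpq'⟩ := Submodule.mem_span_pair.mp hx'
  obtain ⟨r', s', hrs'⟩ := Submodule.mem_span_pair.mp hy'
  have key1 : GB x x * GB y y - GB x y * GB y x =
      (p * s - q * r) ^ 2 * (GB x' x' * GB y' y' - GB x' y' * GB y' x') := by
    rw [GB_expand hpq hpq, GB_expand hrs hrs, GB_expand hpq hrs, GB_expand hrs hpq]
    ring
  have key2 : GB x' x' * GB y' y' - GB x' y' * GB y' x' =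
      (p' * s' - q' * r') ^ 2 * (GB x x * GB y y - GB x y * GB y x) := by
    rw [GB_expand hpq' hpq', GB_expand hrs' hrs', GB_expand hpq' hrs', GB_expand hrs' hpq']
    ring
  set D' := GB x' x' * GB y' y' - GB x' y' * GB y' x'
  set e1 := p * s - q * r
  set e2 := p' * s' - q' * r'
  have hD' : D' = e2 ^ 2 * (e1 ^ 2 * D') := by rw [← key1, ← key2]
  have hsq : e1 ^ 2 * e2 ^ 2 = 1 := by
    have h1 : D' * (e1 ^ 2 * e2 ^ 2 - 1) = 0 := by linear_combination -hD'
    rcases mul_eq_zero.mp h1 with h | h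
    · exact absurd h hne
    · linarith [h]
  have he1 : e1 ^ 2 = 1 :=
    Int.eq_one_of_dvd_one (sq_nonneg _) ⟨e2 ^ 2, hsq.symm⟩
  rw [key1, he1, one_mul]

lemma sq_one_mod_three {q : ℤ} (h : ¬ (3 : ℤ) ∣ q) : ∃ c : ℤ, q * q = 1 + 3 * c := by
  have h1 : q % 3 = 1 ∨ q % 3 = 2 := by omega
  obtain ⟨k, hk⟩ : ∃ k, q = 3 * k + q % 3 := ⟨q / 3, by omega⟩
  rcases h1 with h | h <;> rw [h] at hk
  · exact ⟨3 * k * k + 2 * k, by rw [hk]; ring⟩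
  · exact ⟨3 * k * k + 4 * k + 1, by rw [hk]; ring⟩

lemma GB_h2_u {a : ℤ} {u v : Fin 23 → ℤ} (hvG : inGamma v)
    (hu3 : (3 : ℤ) • u = a • h2 + v) : GB h2 u = -a := by
  have h1 := congrArg (GB h2) hu3
  rw [GB_smul_right, GB_add_right, GB_smul_right, GB_h2_h2, hvG] at h1
  linarith [h1]

lemma idx_three (v : Fin 23 → ℤ) (hvG : inGamma v) {a : ℤ} {u : Fin 23 → ℤ} (huK : u ∈ Kv v)
    (h3a : ¬ (3 : ℤ) ∣ a) (hu3 : (3 : ℤ) • u = a • h2 + v)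
    (hKu : Kv v = Submodule.span ℤ ({h2, u} : Set (Fin 23 → ℤ))) : idx v = 3 := by
  haveI : Fact (Nat.Prime 3) := ⟨by norm_num⟩
  set S := (Submodule.span ℤ ({h2, v} : Set (Fin 23 → ℤ))).toAddSubgroup with hS
  set K := (Kv v).toAddSubgroup with hK
  have hGBu : GB h2 u = -a := GB_h2_u hvG hu3
  let f : K →+ ZMod 3 :=
    { toFun := fun x => ((GB h2 (x : Fin 23 → ℤ) : ℤ) : ZMod 3)
      map_zero' := by
        have h0 : GB h2 (0 : Fin 23 → ℤ) = 0 := by simp [GB]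
        simp [h0]
      map_add' := by
        intro x y
        push_cast [AddSubmonoid.coe_add, GB_add_right]
        ring }
  have hf : ∀ x : K, f x = ((GB h2 (x : Fin 23 → ℤ) : ℤ) : ZMod 3) := fun _ => rfl
  have hker : f.ker = S.addSubgroupOf K := by
    ext x
    rw [AddMonoidHom.mem_ker, AddSubgroup.mem_addSubgroupOf, hf,
      ZMod.intCast_zmod_eq_zero_iff_dvd]
    constructor
    · intro hdvd
      have hxK : (x : Fin 23 → ℤ) ∈ Kv v := x.2
      rw [hKu] at hxK
      obtain ⟨k, c, hkc⟩ := Submodule.mem_span_pair.mp hxK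
      have hGBx : GB h2 (x : Fin 23 → ℤ) = -3 * k - a * c := by
        have h1 := congrArg (GB h2) hkc
        rw [GB_add_right, GB_smul_right, GB_smul_right, GB_h2_h2, hGBu] at h1
        linarith [h1]
      obtain ⟨m, hm⟩ := hdvd
      have hca : (3 : ℤ) ∣ c * a := ⟨-k - m, by push_cast at hm; linear_combination hGBx - hm⟩
      have h3c : (3 : ℤ) ∣ c := by
        rcases (Int.Prime.dvd_mul' (p := 3) (by norm_num) (by exact_mod_cast hca)) with h | h
        · exact_mod_cast h
        · exact absurd (by exact_mod_cast h) h3a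
      obtain ⟨c', rfl⟩ := h3c
      show (x : Fin 23 → ℤ) ∈ Submodule.span ℤ ({h2, v} : Set (Fin 23 → ℤ))
      apply Submodule.mem_span_pair.mpr
      refine ⟨k + c' * a, c', ?_⟩
      funext i
      have hi := congrFun hkc i
      have hui := congrFun hu3 i
      simp only [Pi.add_apply, Pi.smul_apply, smul_eq_mul] at hi hui ⊢
      linear_combination hi - c' * hui
    · intro hmem
      obtain ⟨k, c, hkc⟩ := Submodule.mem_span_pair.mp hmem
      have h1 := congrArg (GB h2) hkc
      rw [GB_add_right, GB_smul_right, GB_smul_right, GB_h2_h2, hvG] at h1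
      exact ⟨-k, by push_cast; linarith [h1]⟩
  have hsurj : Function.Surjective f := by
    intro t
    set z : ZMod 3 := ((-a : ℤ) : ZMod 3) with hzdef
    have hz : z ≠ 0 := by
      intro h0
      rw [hzdef, ZMod.intCast_zmod_eq_zero_iff_dvd] at h0
      exact h3a (by omega)
    set cc : ZMod 3 := t * z⁻¹ with hcc
    have hcz : cc * z = t := by
      rw [hcc, mul_assoc, inv_mul_cancel₀ hz, mul_one]
    refine ⟨(cc.val : ℤ) • (⟨u, huK⟩ : K), ?_⟩
    rw [map_zsmul, hf]
    have h1 : ((GB h2 u : ℤ) : ZMod 3) = z := by rw [hGBu, hzdef]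
    rw [h1, zsmul_eq_mul]
    have hval : (((cc.val : ℤ) : ZMod 3)) = cc := by
      push_cast
      rw [ZMod.natCast_val, ZMod.cast_id]
    rw [hval, hcz]
  have hrange : f.range = (⊤ : AddSubgroup (ZMod 3)) := by
    rw [AddMonoidHom.range_eq_top]
    exact hsurj
  calc idx v = (S.addSubgroupOf K).index := rfl
    _ = f.ker.index := by rw [hker]
    _ = Nat.card f.range := AddSubgroup.index_ker f
    _ = Nat.card (ZMod 3) := by rw [hrange]; exact Nat.card_congr AddSubgroup.topEquiv.toEquiv
    _ = 3 := Nat.card_zmod 3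

/-- For a primitive `v ∈ Γ` with `(v.v) < 0`, one has `disc K_v ≡ 0 (mod 6)` iff
`K_v = ℤh² + ℤv`, and `disc K_v ≡ 2 (mod 6)` iff `ℤh² + ℤv` has index `3` in `K_v`. -/
theorem stmt_2 (v : Fin 23 → ℤ) (hvG : inGamma v) (hv : PrimitiveC v)
    (hneg : GB v v < 0) (d : ℤ) (hd : discIs v d) :
    (d % 6 = 0 ↔ Kv v = Submodule.span ℤ ({h2, v} : Set (Fin 23 → ℤ))) ∧
    (d % 6 = 2 ↔ idx v = 3) := by
  obtain ⟨x, y, hxy, hdet⟩ := hd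
  have hGBvh2 : GB v h2 = 0 := by rw [GB_comm]; exact hvG
  rcases dichotomy v hvG hv with hcase | ⟨hne, a, u, huK, h3a, hu3, hKu⟩
  · -- K_v = span{h2, v}
    have hD : GB h2 h2 * GB v v - GB h2 v * GB v h2 = -3 * GB v v := by
      rw [GB_h2_h2, hvG, hGBvh2]; ring
    have hDne : GB h2 h2 * GB v v - GB h2 v * GB v h2 ≠ 0 := by
      rw [hD]; intro h0; linarith [h0]
    have hdd : d = -3 * GB v v := by
      rw [hdet, det_span_eq x y h2 v (hxy.symm.trans hcase) hDne, hD]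
    have h2w : (2 : ℤ) ∣ GB v v := by
      have hp := GB_self_parity v
      rw [hvG] at hp
      simpa using hp
    have h6 : d % 6 = 0 := by
      obtain ⟨k, hk⟩ := h2w
      omega
    have hidx1 : idx v = 1 := by
      unfold idx
      rw [hcase]
      exact AddSubgroup.relIndex_self _
    refine ⟨⟨fun _ => hcase, fun _ => h6⟩, ⟨fun h2d => ?_, fun hidx => ?_⟩⟩
    · omega
    · rw [hidx1] at hidx; exact absurd hidx (by norm_num)
  · -- index 3 case
    have hGBuh2 : GB h2 u = -a := GB_h2_u hvG hu3
    have hGBu_h2' : GB u h2 = -a := by rw [GB_comm]; exact hGBuh2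
    have h31 : a • h2 + (1 : ℤ) • v = (3 : ℤ) • u := by rw [one_smul]; exact hu3.symm
    have hL : GB ((3:ℤ) • u) ((3:ℤ) • u) = 9 * GB u u := by
      rw [GB_smul_left, GB_smul_right]; ring
    have h9 : 9 * GB u u = GB v v - 3 * (a * a) := by
      have h1 := GB_expand h31 h31
      rw [hL, GB_h2_h2, hvG, hGBvh2] at h1
      linarith [h1]
    have hD : GB h2 h2 * GB u u - GB h2 u * GB u h2 = -3 * GB u u - a * a := by
      rw [GB_h2_h2, hGBuh2, hGBu_h2']; ring
    have h3D : 3 * (-3 * GB u u - a * a) = -(GB v v) := by linear_combination -h9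
    have hDne : GB h2 h2 * GB u u - GB h2 u * GB u h2 ≠ 0 := by
      rw [hD]; intro h0; rw [h0] at h3D; linarith [h3D]
    have hdd : d = -3 * GB u u - a * a := by
      rw [hdet, det_span_eq x y h2 u (hxy.symm.trans hKu) hDne, hD]
    have hpar : (2 : ℤ) ∣ GB u u + a := by
      have hp := GB_self_parity u
      rw [hGBuh2] at hp
      have : GB u u - -a = GB u u + a := by ring
      rwa [this] at hp
    have heven : (2 : ℤ) ∣ a * a - a := by
      rcases Int.even_or_odd a with ⟨b, hb⟩ | ⟨b, hb⟩
      · exact ⟨2 * b * b - b, by rw [hb]; ring⟩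
      · exact ⟨2 * b * b + b, by rw [hb]; ring⟩
    obtain ⟨m3, hm3⟩ := sq_one_mod_three h3a
    have h62 : d % 6 = 2 := by
      obtain ⟨k1, hk1⟩ := hpar
      obtain ⟨k2, hk2⟩ := heven
      omega
    refine ⟨⟨fun h0 => ?_, fun hKeq => absurd hKeq hne⟩,
      ⟨fun _ => idx_three v hvG huK h3a hu3 hKu, fun _ => h62⟩⟩
    omega
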